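/- arXiv:1911.10453 — 2 statements merged into one kernel-verified Lean document; each statement's English description precedes it below -/
import Mathlib

section
/- In sl₂(ℂ) with standard basis H, X, Y and the representation W = F ⊕ Sym³F (F the defining 2-dimensional representation), the element Ω = (e₁, (1/2)e₁₁₂) satisfies H Ω = Ω where here one takes J = H, and the three vectors HΩ, XΩ, YΩ span a Lagrangian subspace of the 8-dimensional symplectic space W (with the standard invariant symplectic structure). -/
open Matrix

namespace Stmt11

/- `sl₂(ℂ)` acting on `W = F ⊕ Sym³F`, realized on `ℂ⁶` with coordinates
`(e₁, e₂, e₁₁₁, e₁₁₂, e₁₂₂, e₂₂₂)`. -/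

/-- The action of `H` on `F ⊕ Sym³F`. -/
def H : Matrix (Fin 6) (Fin 6) ℂ :=
  Matrix.diagonal ![1, -1, 3, 1, -1, -3]

/-- The action of `X` on `F ⊕ Sym³F` (`X e₂ = e₁`, `X v_k = k v_{k-1}`). -/
def X : Matrix (Fin 6) (Fin 6) ℂ :=
  !![0, 1, 0, 0, 0, 0;
     0, 0, 0, 0, 0, 0;
     0, 0, 0, 1, 0, 0;
     0, 0, 0, 0, 2, 0;
     0, 0, 0, 0, 0, 3;
     0, 0, 0, 0, 0, 0]

/-- The action of `Y` on `F ⊕ Sym³F` (`Y e₁ = e₂`, `Y v_k = (3-k) v_{k+1}`). -/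
def Y : Matrix (Fin 6) (Fin 6) ℂ :=
  !![0, 0, 0, 0, 0, 0;
     1, 0, 0, 0, 0, 0;
     0, 0, 0, 0, 0, 0;
     0, 0, 3, 0, 0, 0;
     0, 0, 0, 2, 0, 0;
     0, 0, 0, 0, 1, 0]

/-- The Gram matrix of the standard invariant symplectic form on `F ⊕ Sym³F`:
`ω(e₁,e₂) = 1`, `ω(e₁₁₁, e₂₂₂) = 6`, `ω(e₁₁₂, e₁₂₂) = -2`. -/
def Om : Matrix (Fin 6) (Fin 6) ℂ :=
  !![0,  1, 0, 0,  0, 0;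
     -1, 0, 0, 0,  0, 0;
     0,  0, 0, 0,  0, 6;
     0,  0, 0, 0, -2, 0;
     0,  0, 0, 2,  0, 0;
     0,  0, -6, 0, 0, 0]

/-- `Ω = (e₁, (1/2) e₁₁₂)`. -/
noncomputable def Omega : Fin 6 → ℂ := ![1, 0, 0, 1/2, 0, 0]

lemma cv0 (a b c d e f : ℂ) : (![a,b,c,d,e,f] : Fin 6 → ℂ) 0 = a := rfl
lemma cv1 (a b c d e f : ℂ) : (![a,b,c,d,e,f] : Fin 6 → ℂ) 1 = b := rfl
lemma cv2 (a b c d e f : ℂ) : (![a,b,c,d,e,f] : Fin 6 → ℂ) 2 = c := rfl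
lemma cv3 (a b c d e f : ℂ) : (![a,b,c,d,e,f] : Fin 6 → ℂ) 3 = d := rfl
lemma cv4 (a b c d e f : ℂ) : (![a,b,c,d,e,f] : Fin 6 → ℂ) 4 = e := rfl
lemma cv5 (a b c d e f : ℂ) : (![a,b,c,d,e,f] : Fin 6 → ℂ) 5 = f := rfl


/-- In `sl₂(ℂ)` with standard basis `H, X, Y` acting on `W = F ⊕ Sym³F` (with the
standard invariant symplectic structure `ω`), the element `Ω = (e₁, (1/2) e₁₁₂)` satisfies
`H Ω = Ω` (so `J = H`), and the three vectors `HΩ, XΩ, YΩ` span a Lagrangian subspace of the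
6-dimensional symplectic space `W`: an isotropic subspace of dimension `3 = (1/2) dim W`. -/
theorem stmt11 :
    H *ᵥ Omega = Omega ∧
    (∀ u ∈ Submodule.span ℂ {H *ᵥ Omega, X *ᵥ Omega, Y *ᵥ Omega},
      ∀ v ∈ Submodule.span ℂ {H *ᵥ Omega, X *ᵥ Omega, Y *ᵥ Omega},
        u ⬝ᵥ (Om *ᵥ v) = 0) ∧
    Module.finrank ℂ
      (Submodule.span ℂ {H *ᵥ Omega, X *ᵥ Omega, Y *ᵥ Omega} : Submodule ℂ (Fin 6 → ℂ)) = 3 := by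
  have hH : H *ᵥ Omega = Omega := by
    funext i
    fin_cases i <;>
      norm_num [H, Omega, Matrix.mulVec_diagonal, cv0, cv1, cv2, cv3, cv4, cv5]
  have hX : X *ᵥ Omega = ![0, 0, 1/2, 0, 0, 0] := by
    funext i
    fin_cases i <;>
      norm_num [X, Omega, Matrix.mulVec, dotProduct, Fin.sum_univ_six, cv0, cv1, cv2, cv3, cv4, cv5]
  have hY : Y *ᵥ Omega = ![0, 1, 0, 0, 1, 0] := by
    funext i
    fin_cases i <;>
      norm_num [Y, Omega, Matrix.mulVec, dotProduct, Fin.sum_univ_six, cv0, cv1, cv2, cv3, cv4, cv5]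
  have key : ∀ u ∈ ({H *ᵥ Omega, X *ᵥ Omega, Y *ᵥ Omega} : Set (Fin 6 → ℂ)),
      ∀ v ∈ ({H *ᵥ Omega, X *ᵥ Omega, Y *ᵥ Omega} : Set (Fin 6 → ℂ)),
      u ⬝ᵥ (Om *ᵥ v) = 0 := by
    intro u hu v hv
    simp only [Set.mem_insert_iff, Set.mem_singleton_iff] at hu hv
    rcases hu with rfl | rfl | rfl <;> rcases hv with rfl | rfl | rfl <;>
      · simp only [hH, hX, hY]
        norm_num [Om, Omega, Matrix.mulVec, dotProduct, Fin.sum_univ_six, cv0, cv1, cv2, cv3, cv4, cv5,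
          Matrix.vecHead, Matrix.vecTail]
        all_goals simp
  refine ⟨hH, ?_, ?_⟩
  · intro u hu
    induction hu using Submodule.span_induction with
    | mem x hx =>
      intro v hv
      induction hv using Submodule.span_induction with
      | mem y hy => exact key x hx y hy
      | zero => simp
      | add a b _ _ ha hb => simp [Matrix.mulVec_add, dotProduct_add, ha, hb]
      | smul c a _ ha => simp [Matrix.mulVec_smul, dotProduct_smul, ha]
    | zero => intro v hv; simp
    | add a b _ _ ha hb =>
      intro v hv; simp [add_dotProduct, ha v hv, hb v hv]
    | smul c a _ ha =>
      intro v hv; simp [smul_dotProduct, ha v hv]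
  · have hset : ({H *ᵥ Omega, X *ᵥ Omega, Y *ᵥ Omega} : Set (Fin 6 → ℂ)) =
        Set.range ![H *ᵥ Omega, X *ᵥ Omega, Y *ᵥ Omega] := by
      ext x
      simp [Matrix.range_cons, Matrix.range_empty]
      tauto
    have hli : LinearIndependent ℂ ![H *ᵥ Omega, X *ᵥ Omega, Y *ᵥ Omega] := by
      rw [hH, hX, hY, Fintype.linearIndependent_iff]
      intro g hg
      have h0 := congrFun hg 0
      have h2 := congrFun hg 2
      have h1 := congrFun hg 1
      simp only [Fin.sum_univ_three, Matrix.cons_val_zero, Matrix.cons_val_one,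
        Matrix.head_cons, Matrix.cons_val_two, Matrix.tail_cons, Pi.add_apply,
        Pi.smul_apply, Pi.zero_apply, Omega, smul_eq_mul, cv0, cv1, cv2] at h0 h2 h1
      norm_num at h0 h2 h1
      intro i
      fin_cases i <;> simp_all
    rw [hset, finrank_span_eq_card hli]
    simp

end Stmt11
end

section
/- Let g be simple, (g, W, Ω) a homogeneous Airy datum in the sense that W is a 2·dim(g)-dimensional symplectic g-module, {TΩ}_{T∈g} is Lagrangian, and JΩ = Ω with ad_J diagonalizable with eigenvalues λ_i summing to 0. If the submodule W' ⊆ W generated by Ω has dimension exactly dim g, then tr_{W'}(J) = dim(g) and also tr_{W'}(J) = 0 when dim g > 0 — a contradiction. Hence dim W' > dim g whenever dim g > 0. -/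
attribute [local instance 100] LieRing.ofAssociativeRing

/-- A semisimple Lie algebra is perfect: `⁅⊤, ⊤⁆ = ⊤`. -/
lemma semisimple_perfect {g : Type*} [LieRing g] [LieAlgebra ℂ g]
    [LieAlgebra.IsSemisimple ℂ g] :
    (⁅(⊤ : LieIdeal ℂ g), (⊤ : LieIdeal ℂ g)⁆ : LieIdeal ℂ g) = ⊤ := by
  set D : LieIdeal ℂ g := ⁅(⊤ : LieIdeal ℂ g), (⊤ : LieIdeal ℂ g)⁆ with hD
  set C : LieIdeal ℂ g := Dᶜ with hC
  have hCC : (⁅C, C⁆ : LieIdeal ℂ g) = ⊥ := by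
    rw [eq_bot_iff]
    have h1 : (⁅C, C⁆ : LieIdeal ℂ g) ≤ D ⊓ C :=
      le_inf (LieSubmodule.mono_lie le_top le_top) (LieSubmodule.lie_le_left C C)
    rwa [hC, inf_compl_eq_bot] at h1
  have hCab : IsLieAbelian C := (LieSubmodule.lie_abelian_iff_lie_self_eq_bot C).mpr hCC
  have hCbot : C = ⊥ := by
    have := (LieAlgebra.hasTrivialRadical_iff_no_abelian_ideals (R := ℂ) (L := g)).mp
      inferInstance C hCab
    exact this
  have : D ⊔ C = ⊤ := sup_compl_eq_top
  rw [hCbot, sup_bot_eq] at this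
  exact this

/-- Let `g` be a complex semisimple Lie algebra of dimension `n > 0` and
`(g, W, Ω)` a homogeneous Airy datum: `W` is a `2n`-dimensional symplectic `g`-module (the action
by infinitesimal symplectomorphisms), `{TΩ : T ∈ g}` is a Lagrangian subspace, and `ρ J Ω = Ω`
with `ad J` diagonalizable with eigenvalues `λ i` summing to `0`.  Then the `g`-submodule `W'`
of `W` generated by `Ω` has dimension strictly greater than `dim g`. -/
theorem stmt14 {g : Type*} [LieRing g] [LieAlgebra ℂ g] [FiniteDimensional ℂ g]
    [LieAlgebra.IsSemisimple ℂ g]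
    {W : Type*} [AddCommGroup W] [Module ℂ W] [FiniteDimensional ℂ W]
    {n : ℕ} (hn : Module.finrank ℂ g = n) (hpos : 0 < n)
    (hW : Module.finrank ℂ W = 2 * n)
    (ω : LinearMap.BilinForm ℂ W)
    (halt : ∀ u : W, ω u u = 0) (hnondeg : ω.Nondegenerate)
    (ρ : g →ₗ⁅ℂ⁆ Module.End ℂ W)
    (hskew : ∀ (T : g) (u v : W), ω (ρ T u) v + ω u (ρ T v) = 0)
    (Ω : W)
    (hiso : ∀ T S : g, ω (ρ T Ω) (ρ S Ω) = 0)
    (hLag : Module.finrank ℂ (Submodule.span ℂ (Set.range fun T : g => ρ T Ω)) = n)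
    (J : g) (hJΩ : ρ J Ω = Ω)
    (lam : Fin n → ℂ) (Tb : Module.Basis (Fin n) ℂ g)
    (hTb : ∀ i, ⁅J, Tb i⁆ = lam i • Tb i) (hsum : ∑ i, lam i = 0)
    (W' : Submodule ℂ W) (hΩW' : Ω ∈ W')
    (hW'inv : ∀ (T : g), ∀ w ∈ W', ρ T w ∈ W')
    (hW'min : ∀ U : Submodule ℂ W, Ω ∈ U → (∀ (T : g), ∀ w ∈ U, ρ T w ∈ U) → W' ≤ U) :
    Module.finrank ℂ g < Module.finrank ℂ W' := by
  classical
  rw [hn]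
  set L := Submodule.span ℂ (Set.range fun T : g => ρ T Ω) with hLdef
  have hLW' : L ≤ W' := by
    rw [hLdef, Submodule.span_le]
    rintro _ ⟨T, rfl⟩
    exact hW'inv T Ω hΩW'
  have hge : n ≤ Module.finrank ℂ W' := hLag ▸ Submodule.finrank_mono hLW'
  rcases lt_or_eq_of_le hge with h | heq
  · exact h
  exfalso
  have hLeq : L = W' := Submodule.eq_of_le_of_finrank_le hLW' (by rw [hLag, heq])
  -- the restriction of the action to `W'`
  set r : g → Module.End ℂ W' :=
    fun T => (ρ T).restrict (fun x hx => hW'inv T x hx) with hr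
  have hr_apply : ∀ (T : g) (x : W'), ((r T x : W)) = ρ T x := fun T x => rfl
  have hr_add : ∀ A B : g, r (A + B) = r A + r B := by
    intro A B
    apply LinearMap.ext; intro x
    apply Subtype.ext
    simp [hr_apply, LinearMap.restrict_apply]
  have hr_smul : ∀ (c : ℂ) (A : g), r (c • A) = c • r A := by
    intro c A
    apply LinearMap.ext; intro x
    apply Subtype.ext
    simp [hr_apply, LinearMap.restrict_apply]
  have hr_lie : ∀ A B : g, r ⁅A, B⁆ = r A * r B - r B * r A := by
    intro A B
    apply LinearMap.ext; intro x
    apply Subtype.ext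
    have h1 : ρ ⁅A, B⁆ = ρ A * ρ B - ρ B * ρ A := by
      rw [LieHom.map_lie]; rfl
    simp only [hr, LinearMap.restrict_apply, LinearMap.sub_apply, Module.End.mul_apply, h1]
    rfl
  -- the trace functional
  set τ : g →ₗ[ℂ] ℂ :=
    { toFun := fun T => LinearMap.trace ℂ W' (r T)
      map_add' := by intro A B; rw [hr_add, map_add]
      map_smul' := by intro c A; rw [hr_smul, map_smul]; rfl } with hτ
  have hτ_lie : ∀ A B : g, τ ⁅A, B⁆ = 0 := by
    intro A B
    show LinearMap.trace ℂ W' (r ⁅A, B⁆) = 0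
    rw [hr_lie, map_sub, LinearMap.trace_mul_comm, sub_self]
  -- τ J = 0 since J lies in the derived algebra
  have hJmem : J ∈ Submodule.span ℂ
      { m : g | ∃ x ∈ (⊤ : LieIdeal ℂ g), ∃ y ∈ (⊤ : LieIdeal ℂ g), ⁅x, y⁆ = m } := by
    rw [← LieSubmodule.lieIdeal_oper_eq_linear_span', semisimple_perfect]
    exact LieSubmodule.mem_top _
  have hτJ0 : τ J = 0 := by
    refine Submodule.span_induction ?_ ?_ ?_ ?_ hJmem
    · rintro m ⟨x, -, y, -, rfl⟩
      exact hτ_lie x y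
    · exact map_zero τ
    · intro x y _ _ hx hy
      rw [map_add, hx, hy, add_zero]
    · intro c x _ hx
      rw [map_smul, hx, smul_zero]
  -- the vectors ρ (Tb i) Ω form a basis of W'
  set v : Fin n → W := fun i => ρ (Tb i) Ω with hv
  have hspanv : Submodule.span ℂ (Set.range v) = W' := by
    set φ : g →ₗ[ℂ] W := (LinearMap.applyₗ Ω).comp ρ.toLinearMap with hφ
    have hφ_apply : ∀ T : g, φ T = ρ T Ω := fun T => rfl
    have h1 : L = LinearMap.range φ := by
      rw [hLdef]
      have : (Set.range fun T : g => ρ T Ω) = Set.range φ := rfl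
      rw [this, ← LinearMap.coe_range, Submodule.span_eq]
    have h2 : LinearMap.range φ = Submodule.span ℂ (Set.range v) := by
      rw [LinearMap.range_eq_map, ← Tb.span_eq, Submodule.map_span, ← Set.range_comp]
      rfl
    rw [← h2, ← h1, hLeq]
  have hvW' : ∀ i, v i ∈ W' := fun i => hW'inv (Tb i) Ω hΩW'
  set v' : Fin n → W' := fun i => ⟨v i, hvW' i⟩ with hv'
  have hspanv' : ⊤ ≤ Submodule.span ℂ (Set.range v') := by
    have heqs : Submodule.map W'.subtype (Submodule.span ℂ (Set.range v'))
        = Submodule.map W'.subtype ⊤ := by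
      rw [Submodule.map_span, ← Set.range_comp]
      have hcomp : (⇑W'.subtype ∘ v') = v := rfl
      rw [hcomp, hspanv, Submodule.map_top, Submodule.range_subtype]
    exact (Submodule.map_injective_of_injective (Submodule.injective_subtype W') heqs).ge
  set b : Module.Basis (Fin n) ℂ W' :=
    basisOfTopLeSpanOfCardEqFinrank v' hspanv' (by simp [heq]) with hb
  have hbcoe : ⇑b = v' := coe_basisOfTopLeSpanOfCardEqFinrank v' _ _
  -- eigenvalue computation
  have heig : ∀ i, r J (v' i) = (1 + lam i) • v' i := by
    intro i
    apply Subtype.ext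
    have h1 : ρ ⁅J, Tb i⁆ = ρ J * ρ (Tb i) - ρ (Tb i) * ρ J := by
      rw [LieHom.map_lie]; rfl
    have h2 : ρ ⁅J, Tb i⁆ Ω = ρ J (v i) - v i := by
      rw [h1]
      show ρ J (ρ (Tb i) Ω) - ρ (Tb i) (ρ J Ω) = ρ J (v i) - v i
      rw [hJΩ]
    have h3 : ρ ⁅J, Tb i⁆ Ω = lam i • v i := by
      rw [hTb i, map_smul]
      show lam i • ρ (Tb i) Ω = lam i • v i
      rfl
    have h4 : lam i • v i = ρ J (v i) - v i := h3.symm.trans h2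
    show ρ J (v i) = ((((1 + lam i) • (v' i)) : W') : W)
    push_cast
    show ρ J (v i) = (1 + lam i) • v i
    have h5 : ρ J (v i) = lam i • v i + v i := sub_eq_iff_eq_add.mp h4.symm
    rw [h5, add_smul, one_smul]
    exact add_comm _ _
  -- compute the trace of r J
  have htrJ : τ J = (n : ℂ) := by
    show LinearMap.trace ℂ W' (r J) = (n : ℂ)
    rw [LinearMap.trace_eq_matrix_trace ℂ b, Matrix.trace]
    have hdiag : ∀ i, (LinearMap.toMatrix b b (r J)) i i = 1 + lam i := by
      intro i
      rw [LinearMap.toMatrix_apply, hbcoe, heig i, map_smul]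
      have : v' i = b i := by rw [hbcoe]
      rw [this, b.repr_self]
      simp
    calc ∑ i, (LinearMap.toMatrix b b (r J)).diag i
        = ∑ i, (1 + lam i) := by
          exact Finset.sum_congr rfl (fun i _ => hdiag i)
      _ = (n : ℂ) := by
          rw [Finset.sum_add_distrib, hsum, add_zero]
          simp
  rw [hτJ0] at htrJ
  have : (n : ℂ) ≠ 0 := Nat.cast_ne_zero.mpr hpos.ne'
  exact this htrJ.symm
end
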